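/- An r-connected directed graph is not necessarily r-robust: for every integer r ≥ 2 there exists a finite directed graph on some vertex set that is r-connected but is not r-robust. -/

import Mathlib

open Classical Finset

noncomputable def reachSet {V : Type*} [Fintype V] (E : V → V → Prop)
    (S : Finset V) (r : ℕ) : Finset V :=
  S.filter fun i => r ≤ (Finset.univ.filter fun j => j ∉ S ∧ E j i).card

def IsRSRobust {V : Type*} [Fintype V] (E : V → V → Prop) (r s : ℕ) : Prop :=
  ∀ V1 V2 : Finset V, V1.Nonempty → V2.Nonempty → Disjoint V1 V2 →
    reachSet E V1 r = V1 ∨ reachSet E V2 r = V2 ∨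
      s ≤ (reachSet E V1 r).card + (reachSet E V2 r).card

def StronglyConnectedOn {V : Type*} (E : V → V → Prop) (T : Set V) : Prop :=
  ∀ a ∈ T, ∀ b ∈ T, Relation.ReflTransGen (fun x y => x ∈ T ∧ y ∈ T ∧ E x y) a b

private lemma mod_sub_helper {r v : ℕ} (h1 : r ≤ v) (h2 : v < 2 * r) : v % r = v - r := by
  rw [Nat.mod_eq_sub_mod h1, Nat.mod_eq_of_lt (by omega)]

theorem connected_not_robust :
    ∀ r : ℕ, 2 ≤ r → ∃ (n : ℕ) (E : Fin n → Fin n → Prop),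
      1 < n ∧
      (∀ S : Finset (Fin n), S.card < r → StronglyConnectedOn E {v | v ∉ S}) ∧
      ¬ IsRSRobust E r 1 := by
  intro r hr
  refine ⟨2 * r, fun x y => x.val % r ≠ y.val % r, by omega, ?_, ?_⟩
  · -- r-connectivity
    intro S hS a ha b hb
    simp only [Set.mem_setOf_eq] at ha hb
    by_cases hab : a.val % r ≠ b.val % r
    · exact Relation.ReflTransGen.single ⟨ha, hb, hab⟩
    push_neg at hab
    by_cases heq : a = b
    · subst heq; exact Relation.ReflTransGen.refl
    -- find an intermediate vertex c with a different residue
    have hm : a.val % r < r := Nat.mod_lt _ (by omega)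
    have hC : (univ.filter fun v : Fin (2 * r) => v.val % r = a.val % r) ⊆
        {⟨a.val % r, by omega⟩, ⟨a.val % r + r, by omega⟩} := by
      intro v hv
      simp only [mem_filter, mem_univ, true_and] at hv
      have h1 : v.val < 2 * r := v.isLt
      have h2 := Nat.div_add_mod v.val r
      have hd : v.val / r < 2 := Nat.div_lt_of_lt_mul (by omega)
      have hcase := Nat.le_one_iff_eq_zero_or_eq_one.mp (Nat.lt_succ_iff.mp hd)
      simp only [mem_insert, mem_singleton, Fin.ext_iff]
      rcases hcase with h | h <;> rw [h] at h2 <;> simp at h2 <;> omega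
    have hCcard : (univ.filter fun v : Fin (2 * r) => v.val % r = a.val % r).card ≤ 2 := by
      refine (card_le_card hC).trans ?_
      exact (card_insert_le _ _).trans (by simp)
    have hcompl : r + 1 ≤ Sᶜ.card := by
      have := Finset.card_compl S
      simp only [Fintype.card_fin] at this
      omega
    have : ∃ c ∈ Sᶜ, c.val % r ≠ a.val % r := by
      by_contra hcon
      push_neg at hcon
      have hsub : Sᶜ ⊆ univ.filter fun v : Fin (2 * r) => v.val % r = a.val % r := by
        intro c hc
        simp only [mem_filter, mem_univ, true_and]
        exact hcon c hc
      have := card_le_card hsub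
      omega
    obtain ⟨c, hcS, hc⟩ := this
    rw [Finset.mem_compl] at hcS
    exact Relation.ReflTransGen.head ⟨ha, hcS, fun h => hc h.symm⟩
      (Relation.ReflTransGen.single ⟨hcS, hb, fun h => hc (h.trans hab.symm)⟩)
  · -- not r-robust
    intro hrob
    set V1 : Finset (Fin (2 * r)) := univ.filter fun v => v.val < r with hV1
    set V2 : Finset (Fin (2 * r)) := univ.filter fun v => ¬ v.val < r with hV2
    have h1 : V1.Nonempty := ⟨⟨0, by omega⟩, by simp [hV1]; omega⟩
    have h2 : V2.Nonempty := ⟨⟨r, by omega⟩, by simp [hV2]⟩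
    have hdisj : Disjoint V1 V2 := by
      rw [Finset.disjoint_left]
      intro x hx hx'
      simp [hV1, hV2] at hx hx'
      omega
    have key1 : reachSet (fun x y : Fin (2 * r) => x.val % r ≠ y.val % r) V1 r = ∅ := by
      rw [reachSet, Finset.filter_eq_empty_iff]
      intro i hi
      simp only [hV1, mem_filter, mem_univ, true_and] at hi
      rw [not_le]
      refine lt_of_le_of_lt (Finset.card_le_card_of_injOn
          (t := (Finset.range r).erase i.val) (fun j : Fin (2 * r) => j.val - r) ?_ ?_) ?_
      · intro j hj
        simp only [Finset.mem_coe, mem_filter, mem_univ, true_and, hV1, not_lt] at hj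
        obtain ⟨hjr, hje⟩ := hj
        have hjr' : r ≤ j.val := by simpa using hjr
        have : j.val % r = j.val - r := mod_sub_helper hjr' j.isLt
        have hii : i.val % r = i.val := Nat.mod_eq_of_lt hi
        simp only [Finset.mem_coe, Finset.mem_erase, Finset.mem_range]
        constructor
        · omega
        · have := j.isLt; omega
      · intro j1 hj1 j2 hj2 hf
        simp only [coe_filter, Set.mem_setOf_eq, hV1, not_lt] at hj1 hj2
        have hr1 : r ≤ j1.val := by simpa using hj1.2.1
        have hr2 : r ≤ j2.val := by simpa using hj2.2.1
        have hf' : j1.val - r = j2.val - r := hf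
        exact Fin.ext (by omega)
      · rw [Finset.card_erase_of_mem (by simp [hi]), Finset.card_range]
        omega
    have key2 : reachSet (fun x y : Fin (2 * r) => x.val % r ≠ y.val % r) V2 r = ∅ := by
      rw [reachSet, Finset.filter_eq_empty_iff]
      intro i hi
      simp only [hV2, mem_filter, mem_univ, true_and, not_lt] at hi
      have him : i.val % r = i.val - r := mod_sub_helper hi i.isLt
      rw [not_le]
      refine lt_of_le_of_lt (Finset.card_le_card_of_injOn
          (t := (Finset.range r).erase (i.val - r)) (fun j : Fin (2 * r) => j.val) ?_ ?_) ?_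
      · intro j hj
        simp only [Finset.mem_coe, mem_filter, mem_univ, true_and, hV2, not_not] at hj
        obtain ⟨hjr, hje⟩ := hj
        have hjr' : j.val < r := by simpa using hjr
        have : j.val % r = j.val := Nat.mod_eq_of_lt hjr'
        simp only [Finset.mem_coe, Finset.mem_erase, Finset.mem_range]
        omega
      · intro j1 _ j2 _ hf
        exact Fin.ext hf
      · rw [Finset.card_erase_of_mem (by simp only [Finset.mem_range]; have := i.isLt; omega),
          Finset.card_range]
        omega
    rcases hrob V1 V2 h1 h2 hdisj with h | h | h
    · rw [key1] at h; exact h1.ne_empty h.symm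
    · rw [key2] at h; exact h2.ne_empty h.symm
    · rw [key1, key2] at h; simp at h
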